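/- arXiv:1001.5073 — 5 statements merged into one kernel-verified Lean document; each statement's English description precedes it below -/
import Mathlib

section
/- Let A be a real n×m matrix with n < m satisfying the URP, let 1 ≤ n0 ≤ n, let γ = γ_A(n0) (finite and positive), σ > 0, and x ∈ ℝⁿ. If s1, s2 ∈ S_x satisfy F_{γ,σ}(s_i) ≥ m − n0/(2+2γ) for i = 1,2, then ‖s1 − s2‖ ≤ 2·√(m(γ+1))·σ. Moreover, if s2 = s0 where s0 ∈ S_x has at most n0/2 nonzero components, then the stricter bound ‖s1 − s0‖ ≤ √(m(γ+1))·σ holds. -/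
open Finset
open scoped BigOperators

noncomputable section

/-- Squared Euclidean norm of a vector. -/
def nsq {ι : Type*} [Fintype ι] (s : ι → ℝ) : ℝ := ∑ i, (s i) ^ 2

/-- The Unique Representation Property: every `n × n` submatrix of `A` is invertible. -/
def URP {n m : ℕ} (A : Matrix (Fin n) (Fin m) ℝ) : Prop :=
  ∀ g : Fin n → Fin m, Function.Injective g → IsUnit (A.submatrix id g)

/-- Number of nonzero components (the ℓ⁰ "norm"). -/
def l0 {ι : Type*} [Fintype ι] (s : ι → ℝ) : ℕ :=
  (Finset.univ.filter fun i => s i ≠ 0).card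

/-- Number of components with absolute value greater than σ. -/
def l0s {ι : Type*} [Fintype ι] (s : ι → ℝ) (σ : ℝ) : ℕ :=
  (Finset.univ.filter fun i => σ < |s i|).card

/-- The set of ratios ‖π_I(s)‖²/‖π_{Iᶜ}(s)‖² over index sets `I` with `|I| ≤ n0`
and nonzero null-space vectors `s`. -/
def gammaSet {n m : ℕ} (A : Matrix (Fin n) (Fin m) ℝ) (n0 : ℕ) : Set ℝ :=
  {r | ∃ (I : Finset (Fin m)) (s : Fin m → ℝ), I.card ≤ n0 ∧ A.mulVec s = 0 ∧ s ≠ 0 ∧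
    r = (∑ i ∈ I, (s i) ^ 2) / (∑ i ∈ Iᶜ, (s i) ^ 2)}

/-- γ_A(n0), the supremum of the above set of ratios. -/
def gammaA {n m : ℕ} (A : Matrix (Fin n) (Fin m) ℝ) (n0 : ℕ) : ℝ :=
  sSup (gammaSet A n0)

/-- Square of the largest singular value of a matrix (Rayleigh quotient form). -/
def sMaxSq {p q : Type*} [Fintype p] [Fintype q] (B : Matrix p q ℝ) : ℝ :=
  sSup {r | ∃ v : q → ℝ, nsq v = 1 ∧ r = nsq (B.mulVec v)}

/-- Square of the smallest singular value of a matrix with at least as many rows as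
columns (Rayleigh quotient form). -/
def sMinSq {p q : Type*} [Fintype p] [Fintype q] (B : Matrix p q ℝ) : ℝ :=
  sInf {r | ∃ v : q → ℝ, nsq v = 1 ∧ r = nsq (B.mulVec v)}

/-- The quadratic spline f_γ. -/
def fsp (γ u : ℝ) : ℝ :=
  if |u| ≤ 1 then 1 - u ^ 2 / (1 + γ)
  else if |u| ≤ 1 + γ then (|u| - γ - 1) ^ 2 / (γ ^ 2 + γ)
  else 0

/-- F_{γ,σ}(s) = Σ_i f_γ(s_i/σ). -/
def Fsp {m : ℕ} (γ σ : ℝ) (s : Fin m → ℝ) : ℝ := ∑ i, fsp γ (s i / σ)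

/-- The piecewise second derivative g_γ of f_γ. -/
def gsp (γ u : ℝ) : ℝ :=
  if |u| ≤ 1 then -2 / (1 + γ)
  else if |u| ≤ 1 + γ then 2 / (γ ^ 2 + γ)
  else 0

/-- The derivative f_γ′. -/
def fspDeriv (γ u : ℝ) : ℝ :=
  if |u| ≤ 1 then -2 * u / (1 + γ)
  else if |u| ≤ 1 + γ then 2 * (|u| - γ - 1) / (γ ^ 2 + γ) * Real.sign u
  else 0

/-- The gradient of F_{γ,σ}: its i-th component is (1/σ)·f_γ′(s_i/σ). -/
def gradF {m : ℕ} (γ σ : ℝ) (s : Fin m → ℝ) : Fin m → ℝ :=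
  fun i => fspDeriv γ (s i / σ) / σ

/-- The lower asymmetric restricted isometry constant δ_k^{min} of `A`. -/
def aricMin {n m : ℕ} (A : Matrix (Fin n) (Fin m) ℝ) (k : ℕ) : ℝ :=
  sInf {δ : ℝ | 0 ≤ δ ∧ ∀ s : Fin m → ℝ, l0 s ≤ k → (1 - δ) * nsq s ≤ nsq (A.mulVec s)}

end

/- ### Auxiliary lemmas -/

lemma fsp_le_one {γ : ℝ} (hγ : 0 < γ) (u : ℝ) : fsp γ u ≤ 1 := by
  unfold fsp
  split_ifs with h1 h2
  · have h : 0 ≤ u ^ 2 / (1 + γ) := by positivity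
    linarith
  · have hu : 1 < |u| := not_le.mp h1
    rw [div_le_one (by nlinarith)]
    nlinarith [mul_nonneg (by linarith : (0:ℝ) ≤ |u| - 1)
      (by linarith : (0:ℝ) ≤ 1 + 2 * γ - |u|)]
  · norm_num

lemma fsp_le_of_big {γ : ℝ} (hγ : 0 < γ) {u : ℝ} (hu : 1 < |u|) :
    fsp γ u ≤ γ / (1 + γ) := by
  unfold fsp
  rw [if_neg (not_le.mpr hu)]
  split_ifs with h2
  · rw [div_le_div_iff₀ (by nlinarith) (by nlinarith)]
    have key : (|u| - γ - 1) ^ 2 ≤ γ ^ 2 := by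
      nlinarith [mul_nonneg (by linarith : (0:ℝ) ≤ |u| - 1)
        (by linarith : (0:ℝ) ≤ 1 + 2 * γ - |u|)]
    nlinarith [key]
  · positivity

/-- URP implies no nonzero null-space vector is supported on at most `n` columns. -/
lemma urp_null {n m : ℕ} (hnm : n < m) {A : Matrix (Fin n) (Fin m) ℝ}
    (hURP : URP A) {d : Fin m → ℝ} (hd : A.mulVec d = 0)
    {I : Finset (Fin m)} (hIc : I.card ≤ n) (hsupp : ∀ i ∉ I, d i = 0) :
    d = 0 := by
  obtain ⟨J, hIJ, -, hJ⟩ := Finset.exists_subsuperset_card_eq (I.subset_univ)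
    hIc (by simpa using hnm.le)
  set g : Fin n → Fin m := fun i => J.orderEmbOfFin hJ i with hg
  have hginj : Function.Injective g := (J.orderEmbOfFin hJ).injective
  have hrange : ∀ k, k ∈ J ↔ ∃ i, g i = k := by
    intro k
    constructor
    · intro hk
      have : (k : Fin m) ∈ Set.range (J.orderEmbOfFin hJ) := by
        rw [Finset.range_orderEmbOfFin]; exact hk
      exact this
    · rintro ⟨i, rfl⟩; exact J.orderEmbOfFin_mem hJ i
  have hU := hURP g hginj
  have hMinj : Function.Injective (A.submatrix id g).mulVec :=
    Matrix.mulVec_injective_iff_isUnit.2 hU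
  have hzero : (A.submatrix id g).mulVec (d ∘ g) = 0 := by
    funext j
    have himg : Finset.univ.image g = J := by
      ext k
      simp only [Finset.mem_image, Finset.mem_univ, true_and]
      exact (hrange k).symm
    have h1 : ∑ i : Fin n, A j (g i) * d (g i) = ∑ k ∈ J, A j k * d k := by
      rw [← himg, Finset.sum_image (fun a _ b _ h => hginj h)]
    have h2 : ∑ k ∈ J, A j k * d k = ∑ k, A j k * d k := by
      refine Finset.sum_subset (J.subset_univ) fun k _ hk => ?_
      rw [hsupp k (fun hkI => hk (hIJ hkI)), mul_zero]
    have h3 : (A.mulVec d) j = 0 := by rw [hd]; rfl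
    simp only [Matrix.mulVec, dotProduct, Matrix.submatrix_apply, id_eq,
      Function.comp_apply, Pi.zero_apply]
    rw [h1, h2]
    simpa [Matrix.mulVec, dotProduct] using h3
  have hdg : d ∘ g = 0 := hMinj (by rw [hzero, Matrix.mulVec_zero])
  funext k
  by_cases hk : k ∈ J
  · obtain ⟨i, rfl⟩ := (hrange k).mp hk
    exact congrFun hdg i
  · exact hsupp k (fun hkI => hk (hIJ hkI))

/-- A high value of `Fsp` forces few components larger than σ. -/
lemma count_bound {m n0 : ℕ} {γ σ : ℝ} (hγ : 0 < γ) (hσ : 0 < σ)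
    {s : Fin m → ℝ} (hF : (m : ℝ) - n0 / (2 + 2 * γ) ≤ Fsp γ σ s) :
    ((Finset.univ.filter fun i => σ < |s i|).card : ℝ) ≤ n0 / 2 := by
  set T := Finset.univ.filter fun i => σ < |s i| with hT
  have h1γ : (0:ℝ) < 1 + γ := by linarith
  have hterm : ∀ i ∈ T, 1 / (1 + γ) ≤ 1 - fsp γ (s i / σ) := by
    intro i hi
    have hi' : σ < |s i| := (Finset.mem_filter.mp hi).2
    have habs : 1 < |s i / σ| := by
      rw [abs_div, abs_of_pos hσ]
      exact (one_lt_div hσ).mpr hi'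
    have hle := fsp_le_of_big hγ habs
    have heq : γ / (1 + γ) = 1 - 1 / (1 + γ) := by field_simp; ring
    linarith [heq ▸ hle]
  have hs1 : (T.card : ℝ) * (1 / (1 + γ)) ≤ ∑ i ∈ T, (1 - fsp γ (s i / σ)) := by
    calc (T.card : ℝ) * (1 / (1 + γ)) = ∑ _i ∈ T, 1 / (1 + γ) := by
          rw [Finset.sum_const, nsmul_eq_mul]
      _ ≤ _ := Finset.sum_le_sum hterm
  have hs2 : ∑ i ∈ T, (1 - fsp γ (s i / σ)) ≤ ∑ i, (1 - fsp γ (s i / σ)) :=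
    Finset.sum_le_sum_of_subset_of_nonneg (T.subset_univ)
      (fun i _ _ => by linarith [fsp_le_one hγ (s i / σ)])
  have hs3 : ∑ i, (1 - fsp γ (s i / σ)) = (m : ℝ) - Fsp γ σ s := by
    rw [Finset.sum_sub_distrib, Finset.sum_const, Finset.card_univ]
    simp [Fsp]
  have hkey : (T.card : ℝ) * (1 / (1 + γ)) ≤ (n0 : ℝ) / 2 * (1 / (1 + γ)) := by
    have hrw : (n0 : ℝ) / (2 + 2 * γ) = (n0 : ℝ) / 2 * (1 / (1 + γ)) := by
      rw [div_mul_div_comm, mul_one]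
      ring_nf
    calc (T.card : ℝ) * (1 / (1 + γ)) ≤ ∑ i, (1 - fsp γ (s i / σ)) := hs1.trans hs2
      _ = (m : ℝ) - Fsp γ σ s := hs3
      _ ≤ (n0 : ℝ) / (2 + 2 * γ) := by linarith
      _ = (n0 : ℝ) / 2 * (1 / (1 + γ)) := hrw
  exact le_of_mul_le_mul_right hkey (by positivity)

/-- Core estimate: a null-space vector small outside a set of at most `n0` indices
has small norm. -/
lemma core_bound {n m : ℕ} (hnm : n < m) {A : Matrix (Fin n) (Fin m) ℝ}
    (hURP : URP A) {n0 : ℕ} (hn0 : n0 ≤ n) {γ : ℝ} (hγ : γ = gammaA A n0)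
    (hγpos : 0 < γ) (hbdd : BddAbove (gammaSet A n0))
    {d : Fin m → ℝ} (hd : A.mulVec d = 0) {I : Finset (Fin m)} (hI : I.card ≤ n0)
    {c : ℝ} (hc : 0 ≤ c) (hsmall : ∀ i ∉ I, |d i| ≤ c) :
    Real.sqrt (nsq d) ≤ Real.sqrt ((m : ℝ) * (γ + 1)) * c := by
  by_cases hd0 : d = 0
  · simp only [hd0, nsq, Pi.zero_apply]
    simp only [ne_eq, OfNat.ofNat_ne_zero, not_false_eq_true, zero_pow]
    rw [Finset.sum_const_zero, Real.sqrt_zero]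
    positivity
  have hpos : 0 < ∑ i ∈ Iᶜ, (d i) ^ 2 := by
    rcases (Finset.sum_nonneg fun i _ => sq_nonneg (d i)).lt_or_eq with h | h
    · exact h
    · exfalso
      apply hd0
      refine urp_null hnm hURP hd (hI.trans hn0) fun i hi => ?_
      have hz := (Finset.sum_eq_zero_iff_of_nonneg
        (fun i _ => sq_nonneg (d i))).mp h.symm i (Finset.mem_compl.mpr hi)
      exact pow_eq_zero_iff (by norm_num) |>.mp hz
  have hmem : (∑ i ∈ I, (d i) ^ 2) / (∑ i ∈ Iᶜ, (d i) ^ 2) ∈ gammaSet A n0 :=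
    ⟨I, d, hI, hd, hd0, rfl⟩
  have hratio : (∑ i ∈ I, (d i) ^ 2) / (∑ i ∈ Iᶜ, (d i) ^ 2) ≤ γ :=
    hγ ▸ le_csSup hbdd hmem
  have hIle : ∑ i ∈ I, (d i) ^ 2 ≤ γ * ∑ i ∈ Iᶜ, (d i) ^ 2 :=
    (div_le_iff₀ hpos).mp hratio
  have hcomp : ∑ i ∈ Iᶜ, (d i) ^ 2 ≤ (m : ℝ) * c ^ 2 := by
    calc ∑ i ∈ Iᶜ, (d i) ^ 2 ≤ ∑ _i ∈ Iᶜ, c ^ 2 := by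
          refine Finset.sum_le_sum fun i hi => ?_
          have h1 := hsmall i (Finset.mem_compl.mp hi)
          nlinarith [abs_nonneg (d i), sq_abs (d i)]
      _ = (Iᶜ.card : ℝ) * c ^ 2 := by rw [Finset.sum_const, nsmul_eq_mul]
      _ ≤ (m : ℝ) * c ^ 2 := by
          have : (Iᶜ.card : ℝ) ≤ (m : ℝ) := by
            exact_mod_cast (Finset.card_le_univ Iᶜ).trans (by simp)
          nlinarith [sq_nonneg c]
  have hnsq : nsq d ≤ (m : ℝ) * (γ + 1) * c ^ 2 := by
    have hsplit := Finset.sum_add_sum_compl I (fun i => (d i) ^ 2)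
    unfold nsq
    nlinarith
  calc Real.sqrt (nsq d) ≤ Real.sqrt ((m : ℝ) * (γ + 1) * c ^ 2) :=
        Real.sqrt_le_sqrt hnsq
    _ = Real.sqrt ((m : ℝ) * (γ + 1)) * c := by
        rw [Real.sqrt_mul (by positivity), Real.sqrt_sq hc]

/-- two points of S_x on which F_{γ,σ} ≥ m − n0/(2+2γ) lie within
Euclidean distance 2√(m(γ+1))σ of each other; if moreover the second point has at most
n0/2 nonzero components, the distance is at most √(m(γ+1))σ. -/
theorem stmt_10 {n m : ℕ} (hnm : n < m) (A : Matrix (Fin n) (Fin m) ℝ)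
    (hURP : URP A) (n0 : ℕ) (hn1 : 1 ≤ n0) (hn0 : n0 ≤ n)
    (γ : ℝ) (hγ : γ = gammaA A n0) (hγpos : 0 < γ) (hbdd : BddAbove (gammaSet A n0))
    (σ : ℝ) (hσ : 0 < σ) (x : Fin n → ℝ)
    (s1 s2 : Fin m → ℝ) (hs1x : A.mulVec s1 = x) (hs2x : A.mulVec s2 = x)
    (hF1 : (m : ℝ) - n0 / (2 + 2 * γ) ≤ Fsp γ σ s1)
    (hF2 : (m : ℝ) - n0 / (2 + 2 * γ) ≤ Fsp γ σ s2) :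
    Real.sqrt (nsq (s1 - s2)) ≤ 2 * Real.sqrt (m * (γ + 1)) * σ ∧
      ((l0 s2 : ℝ) ≤ n0 / 2 →
        Real.sqrt (nsq (s1 - s2)) ≤ Real.sqrt (m * (γ + 1)) * σ) := by
  have h1 := count_bound hγpos hσ hF1
  have h2 := count_bound hγpos hσ hF2
  have hd : A.mulVec (s1 - s2) = 0 := by
    rw [Matrix.mulVec_sub, hs1x, hs2x, sub_self]
  set T1 := Finset.univ.filter fun i => σ < |s1 i| with hT1
  set T2 := Finset.univ.filter fun i => σ < |s2 i| with hT2
  constructor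
  · -- first bound, with I = T1 ∪ T2
    have hcard : (T1 ∪ T2).card ≤ n0 := by
      have hr : ((T1 ∪ T2).card : ℝ) ≤ (n0 : ℝ) := by
        calc ((T1 ∪ T2).card : ℝ) ≤ (T1.card : ℝ) + T2.card := by
              exact_mod_cast Finset.card_union_le T1 T2
          _ ≤ (n0 : ℝ) / 2 + (n0 : ℝ) / 2 := add_le_add h1 h2
          _ = n0 := by ring
      exact_mod_cast hr
    have hsmall : ∀ i ∉ T1 ∪ T2, |(s1 - s2) i| ≤ 2 * σ := by
      intro i hi
      rw [Finset.mem_union, not_or] at hi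
      have hi1 : |s1 i| ≤ σ := by
        by_contra h
        exact hi.1 (Finset.mem_filter.mpr ⟨Finset.mem_univ i, not_le.mp h⟩)
      have hi2 : |s2 i| ≤ σ := by
        by_contra h
        exact hi.2 (Finset.mem_filter.mpr ⟨Finset.mem_univ i, not_le.mp h⟩)
      calc |(s1 - s2) i| = |s1 i - s2 i| := by rw [Pi.sub_apply]
        _ ≤ |s1 i| + |s2 i| := abs_sub _ _
        _ ≤ 2 * σ := by linarith
    have := core_bound hnm hURP hn0 hγ hγpos hbdd hd hcard
      (by positivity : (0:ℝ) ≤ 2 * σ) hsmall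
    calc Real.sqrt (nsq (s1 - s2)) ≤ Real.sqrt ((m : ℝ) * (γ + 1)) * (2 * σ) := this
      _ = 2 * Real.sqrt ((m : ℝ) * (γ + 1)) * σ := by ring
  · -- second bound, with I = T1 ∪ supp s2
    intro hl0
    set S2 := Finset.univ.filter fun i => s2 i ≠ 0 with hS2
    have hcard : (T1 ∪ S2).card ≤ n0 := by
      have hr : ((T1 ∪ S2).card : ℝ) ≤ (n0 : ℝ) := by
        calc ((T1 ∪ S2).card : ℝ) ≤ (T1.card : ℝ) + S2.card := by
              exact_mod_cast Finset.card_union_le T1 S2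
          _ ≤ (n0 : ℝ) / 2 + (n0 : ℝ) / 2 := add_le_add h1 hl0
          _ = n0 := by ring
      exact_mod_cast hr
    have hsmall : ∀ i ∉ T1 ∪ S2, |(s1 - s2) i| ≤ σ := by
      intro i hi
      rw [Finset.mem_union, not_or] at hi
      have hi1 : |s1 i| ≤ σ := by
        by_contra h
        exact hi.1 (Finset.mem_filter.mpr ⟨Finset.mem_univ i, not_le.mp h⟩)
      have hi2 : s2 i = 0 := by
        by_contra h
        exact hi.2 (Finset.mem_filter.mpr ⟨Finset.mem_univ i, h⟩)
      calc |(s1 - s2) i| = |s1 i - s2 i| := by rw [Pi.sub_apply]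
        _ = |s1 i| := by rw [hi2, sub_zero]
        _ ≤ σ := hi1
    exact core_bound hnm hURP hn0 hγ hγpos hbdd hd hcard hσ.le hsmall
end

section
/- For every γ > 0 and σ > 0: the function f_{γ,σ} is differentiable on ℝ with |f_{γ,σ}′(s)| ≤ 2/((1+γ)σ) for all s ∈ ℝ, and consequently for all s1, s2 ∈ ℝ^m, |F_{γ,σ}(s1) − F_{γ,σ}(s2)| ≤ (2√m / ((1+γ)σ)) · ‖s1 − s2‖, where ‖·‖ is the Euclidean norm. -/
open Finset
open scoped BigOperators

lemma qsq_hasDerivAt (x : ℝ) : HasDerivAt (fun y : ℝ => max 0 y ^ 2) (2 * max 0 x) x := by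
  rcases lt_trichotomy x 0 with h | h | h
  · have h1 : (fun y : ℝ => max 0 y ^ 2) =ᶠ[nhds x] fun _ => (0:ℝ) :=
      Filter.eventuallyEq_of_mem (Iio_mem_nhds h) (fun y hy => by
        simp [max_eq_left (le_of_lt (Set.mem_Iio.1 hy))])
    have := (hasDerivAt_const x (0:ℝ)).congr_of_eventuallyEq h1
    simpa [max_eq_left h.le] using this
  · subst h
    rw [hasDerivAt_iff_isLittleO]
    simp only [max_self, mul_zero, sub_zero, smul_zero]
    rw [Asymptotics.isLittleO_iff]
    intro c hc
    filter_upwards [Metric.ball_mem_nhds (0:ℝ) hc] with y hy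
    rw [Metric.mem_ball, Real.dist_eq, sub_zero] at hy
    have h1 : max 0 y ^ 2 ≤ |y| * |y| := by
      rcases le_or_gt y 0 with h2 | h2
      · rw [max_eq_left h2]; nlinarith [abs_nonneg y]
      · rw [max_eq_right h2.le]; nlinarith [abs_of_pos h2]
    have : ‖max 0 y ^ 2‖ ≤ c * ‖y‖ := by
      rw [Real.norm_eq_abs, Real.norm_eq_abs, abs_of_nonneg (by positivity)]
      calc max 0 y ^ 2 ≤ |y| * |y| := h1
        _ ≤ c * |y| := by nlinarith [abs_nonneg y]
    simpa using this
  · have h1 : (fun y : ℝ => max 0 y ^ 2) =ᶠ[nhds x] fun y => y ^ 2 :=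
      Filter.eventuallyEq_of_mem (Ioi_mem_nhds h) (fun y hy => by
        simp [max_eq_right (le_of_lt (Set.mem_Ioi.1 hy))])
    have := (hasDerivAt_pow 2 x).congr_of_eventuallyEq h1
    simpa [max_eq_right h.le, mul_comm] using this

lemma fsp_formula (γ : ℝ) (hγ : 0 < γ) (u : ℝ) :
    fsp γ u = ((max 0 (1+γ-|u|))^2 - (1+γ) * (max 0 (1-|u|))^2) / (γ^2+γ) := by
  have hg1 : (0:ℝ) < 1 + γ := by linarith
  have hg2 : γ^2 + γ ≠ 0 := by nlinarith
  unfold fsp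
  rcases le_or_gt |u| 1 with h1 | h1
  · rw [if_pos h1, max_eq_right (by linarith), max_eq_right (by linarith)]
    have : |u|^2 = u^2 := sq_abs u
    field_simp
    rw [← this]; ring
  · rw [if_neg (not_le.2 h1)]
    rcases le_or_gt |u| (1+γ) with h2 | h2
    · rw [if_pos h2, max_eq_right (by linarith), max_eq_left (by linarith)]
      ring_nf
    · rw [if_neg (not_le.2 h2), max_eq_left (by linarith), max_eq_left (by linarith)]
      simp

lemma G_hasDerivAt (γ : ℝ) (y : ℝ) :
    HasDerivAt (fun y : ℝ => ((max 0 (1+γ-y))^2 - (1+γ) * (max 0 (1-y))^2) / (γ^2+γ))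
      ((-(2 * max 0 (1+γ-y)) + (1+γ) * (2 * max 0 (1-y))) / (γ^2+γ)) y := by
  have h1 : HasDerivAt (fun y : ℝ => (max 0 (1+γ-y))^2) (2 * max 0 (1+γ-y) * (0-1)) y :=
    HasDerivAt.comp y (qsq_hasDerivAt (1+γ-y)) ((hasDerivAt_const y (1+γ)).sub (hasDerivAt_id y))
  have h2 : HasDerivAt (fun y : ℝ => (max 0 (1-y))^2) (2 * max 0 (1-y) * (0-1)) y :=
    HasDerivAt.comp y (qsq_hasDerivAt (1-y)) ((hasDerivAt_const y (1:ℝ)).sub (hasDerivAt_id y))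
  have := (h1.sub (h2.const_mul (1+γ))).div_const (γ^2+γ)
  exact this.congr_deriv (by ring)

lemma bound_aux (γ t : ℝ) (hγ : 0 < γ) (ht : 0 ≤ t) :
    |(-(2 * max 0 (1+γ-t)) + (1+γ) * (2 * max 0 (1-t))) / (γ^2+γ)| ≤ 2/(1+γ) := by
  have hd : (0:ℝ) < γ^2+γ := by nlinarith
  rw [abs_div, abs_of_pos hd, div_le_div_iff₀ hd (by linarith)]
  have key : |(-(2 * max 0 (1+γ-t)) + (1+γ) * (2 * max 0 (1-t)))| ≤ 2*γ := by
    rcases le_or_gt t 1 with h1 | h1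
    · rw [max_eq_right (by linarith), max_eq_right (by linarith), abs_le]
      constructor <;> nlinarith
    · rcases le_or_gt t (1+γ) with h2 | h2
      · rw [max_eq_right (by linarith), max_eq_left (by linarith), abs_le]
        constructor <;> nlinarith
      · rw [max_eq_left (by linarith), max_eq_left (by linarith)]
        simp
        positivity
  nlinarith [key, abs_nonneg (-(2 * max 0 (1+γ-t)) + (1+γ) * (2 * max 0 (1-t)))]

lemma fsp_hasDerivAt (γ : ℝ) (hγ : 0 < γ) (u : ℝ) :
    ∃ d, HasDerivAt (fsp γ) d u ∧ |d| ≤ 2/(1+γ) := by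
  rcases lt_trichotomy u 0 with hu | hu | hu
  · refine ⟨(-(2 * max 0 (1+γ- -u)) + (1+γ) * (2 * max 0 (1- -u))) / (γ^2+γ) * (-1), ?_, ?_⟩
    · have hD : HasDerivAt
          ((fun y : ℝ => ((max 0 (1+γ-y))^2 - (1+γ) * (max 0 (1-y))^2) / (γ^2+γ)) ∘ fun x : ℝ => -x)
          ((-(2 * max 0 (1+γ- -u)) + (1+γ) * (2 * max 0 (1- -u))) / (γ^2+γ) * (-1)) u :=
        HasDerivAt.comp u (G_hasDerivAt γ (-u)) (hasDerivAt_neg u)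
      refine hD.congr_of_eventuallyEq ?_
      refine Filter.eventuallyEq_of_mem (Iio_mem_nhds hu) fun y hy => ?_
      have : y < 0 := hy
      rw [fsp_formula γ hγ, abs_of_neg this]
      rfl
    · rw [mul_neg_one, abs_neg]
      exact bound_aux γ (-u) hγ (by linarith)
  · refine ⟨0, ?_, by rw [abs_zero]; exact div_nonneg (by norm_num) (by linarith)⟩
    have h1 : fsp γ =ᶠ[nhds u] fun y => 1 - y^2/(1+γ) := by
      refine Filter.eventuallyEq_of_mem (Ioo_mem_nhds (by rw [hu]; norm_num) (by rw [hu]; norm_num) :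
        Set.Ioo (-1:ℝ) 1 ∈ nhds u) fun y hy => ?_
      unfold fsp
      rw [if_pos (abs_le.2 ⟨hy.1.le, hy.2.le⟩)]
    have h2 : HasDerivAt (fun y : ℝ => 1 - y^2/(1+γ)) 0 u := by
      have := ((hasDerivAt_pow 2 u).div_const (1+γ)).const_sub 1
      rw [hu] at this ⊢
      simpa using this
    exact h2.congr_of_eventuallyEq h1
  · refine ⟨(-(2 * max 0 (1+γ-u)) + (1+γ) * (2 * max 0 (1-u))) / (γ^2+γ), ?_, ?_⟩
    · refine (G_hasDerivAt γ u).congr_of_eventuallyEq ?_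
      refine Filter.eventuallyEq_of_mem (Ioi_mem_nhds hu) fun y hy => ?_
      have : (0:ℝ) < y := hy
      rw [fsp_formula γ hγ, abs_of_pos this]
    · exact bound_aux γ u hγ hu.le

lemma fsps_hasDerivAt (γ σ : ℝ) (hγ : 0 < γ) (hσ : 0 < σ) (s : ℝ) :
    ∃ d, HasDerivAt (fun u : ℝ => fsp γ (u / σ)) d s ∧ |d| ≤ 2 / ((1 + γ) * σ) := by
  obtain ⟨d, hd, hb⟩ := fsp_hasDerivAt γ hγ (s / σ)
  refine ⟨d * (1/σ), ?_, ?_⟩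
  · have h2 : HasDerivAt (fun u : ℝ => u / σ) (1/σ) s := by
      simpa using (hasDerivAt_id s).div_const σ
    exact HasDerivAt.comp s hd h2
  · rw [abs_mul, abs_of_pos (by positivity : (0:ℝ) < 1/σ)]
    have : 2 / ((1+γ)*σ) = (2/(1+γ)) * (1/σ) := by
      field_simp
    rw [this]
    exact mul_le_mul_of_nonneg_right hb (by positivity)


/-- f_{γ,σ} is differentiable with derivative bounded by 2/((1+γ)σ), and
consequently F_{γ,σ} is Lipschitz with constant 2√m/((1+γ)σ) w.r.t. the Euclidean norm. -/
theorem stmt_11 {m : ℕ} (γ σ : ℝ) (hγ : 0 < γ) (hσ : 0 < σ) :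
    (∀ s : ℝ, ∃ d : ℝ, HasDerivAt (fun u : ℝ => fsp γ (u / σ)) d s ∧
      |d| ≤ 2 / ((1 + γ) * σ)) ∧
    ∀ s1 s2 : Fin m → ℝ,
      |Fsp γ σ s1 - Fsp γ σ s2| ≤
        2 * Real.sqrt m / ((1 + γ) * σ) * Real.sqrt (nsq (s1 - s2)) := by
  
  refine ⟨fun s => fsps_hasDerivAt γ σ hγ hσ s, ?_⟩
  choose d hd hb using fun s => fsps_hasDerivAt γ σ hγ hσ s
  set C := 2 / ((1+γ)*σ) with hC
  have hC0 : 0 ≤ C := le_of_lt (div_pos two_pos (mul_pos (by linarith) hσ))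
  have hlip : ∀ a b : ℝ, |fsp γ (a/σ) - fsp γ (b/σ)| ≤ C * |a - b| := by
    intro a b
    have := Convex.norm_image_sub_le_of_norm_hasDerivWithin_le
      (f := fun u : ℝ => fsp γ (u/σ)) (f' := d) (C := C) (s := Set.univ)
      (fun x _ => (hd x).hasDerivWithinAt) (fun x _ => by simpa using hb x)
      convex_univ (Set.mem_univ b) (Set.mem_univ a)
    simpa [Real.norm_eq_abs] using this
  intro s1 s2
  have h1 : |Fsp γ σ s1 - Fsp γ σ s2| ≤ C * ∑ i, |s1 i - s2 i| := by
    unfold Fsp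
    rw [← Finset.sum_sub_distrib, Finset.mul_sum]
    refine (Finset.abs_sum_le_sum_abs _ _).trans ?_
    refine Finset.sum_le_sum fun i _ => ?_
    have := hlip (s1 i) (s2 i)
    simpa [sub_div] using this
  have hnsq : nsq (s1 - s2) = ∑ i, (s1 i - s2 i)^2 := by
    unfold nsq
    simp [Pi.sub_apply]
  have h2 : ∑ i, |s1 i - s2 i| ≤ Real.sqrt m * Real.sqrt (nsq (s1 - s2)) := by
    rw [← Real.sqrt_mul (Nat.cast_nonneg m), hnsq]
    have hcs : (∑ i, |s1 i - s2 i|)^2 ≤ (m:ℝ) * ∑ i, (s1 i - s2 i)^2 := by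
      have := sq_sum_le_card_mul_sum_sq (s := Finset.univ) (f := fun i : Fin m => |s1 i - s2 i|)
      simpa [sq_abs, Finset.card_univ] using this
    calc ∑ i, |s1 i - s2 i| = Real.sqrt ((∑ i, |s1 i - s2 i|)^2) :=
          (Real.sqrt_sq (Finset.sum_nonneg fun i _ => abs_nonneg _)).symm
      _ ≤ _ := Real.sqrt_le_sqrt hcs
  calc |Fsp γ σ s1 - Fsp γ σ s2| ≤ C * ∑ i, |s1 i - s2 i| := h1
    _ ≤ C * (Real.sqrt m * Real.sqrt (nsq (s1 - s2))) :=
        mul_le_mul_of_nonneg_left h2 hC0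
    _ = 2 * Real.sqrt m / ((1 + γ) * σ) * Real.sqrt (nsq (s1 - s2)) := by
        rw [hC]; ring
end

section
/- Let γ > 0, σ > 0, and let A₀, B₀ be constants with 0 ≤ A₀ ≤ B₀, and set c = 2m/(2m + B₀ − A₀). Then: (i) for every s ∈ ℝ^m, if F_{γ,σ}(s) ≥ m − A₀ then F_{γ,cσ}(s) ≥ m − B₀; and (ii) for every s ∈ ℝ^m, F_{γ,σ}(s) ≥ m − ‖s‖²/((1+γ)σ²), where ‖·‖ is the Euclidean norm. -/
open Finset
open scoped BigOperators

lemma fsp_nonneg (γ : ℝ) (hγ : 0 < γ) (u : ℝ) : 0 ≤ fsp γ u := by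
  unfold fsp
  have h := sq_abs u
  split_ifs with h1 h2
  · have hβ : (0:ℝ) < 1 + γ := by linarith
    have h' : u ^ 2 ≤ 1 + γ := by nlinarith [abs_nonneg u]
    have := div_le_one_of_le₀ h' hβ.le
    linarith
  · positivity
  · exact le_rfl

lemma fsp_ge_quad (γ : ℝ) (hγ : 0 < γ) (u : ℝ) : 1 - u ^ 2 / (1 + γ) ≤ fsp γ u := by
  unfold fsp
  have hβ : (0:ℝ) < 1 + γ := by linarith
  have hγβ : (0:ℝ) < γ ^ 2 + γ := by positivity
  have h := sq_abs u
  split_ifs with h1 h2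
  · exact le_rfl
  · have key : (|u| - γ - 1) ^ 2 / (γ ^ 2 + γ) - (1 - |u| ^ 2 / (1 + γ)) = (|u| - 1) ^ 2 / γ := by
      field_simp; linear_combination (0:ℝ) * h
    rw [h] at key
    linarith [div_nonneg (sq_nonneg (|u| - 1)) hγ.le]
  · push_neg at h1 h2
    rw [sub_nonpos, le_div_iff₀ hβ]
    nlinarith [abs_nonneg u]

lemma fsp_key (γ : ℝ) (hγ : 0 < γ) (c : ℝ) (hc0 : 0 < c) (hc1 : c ≤ 1) (u : ℝ) :
    fsp γ u - fsp γ (u / c) ≤ 2 * (1 - c) / c := by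
  have hβ : (0:ℝ) < 1 + γ := by linarith
  have hγβ : (0:ℝ) < γ ^ 2 + γ := by positivity
  have h1c : (0:ℝ) ≤ 1 - c := by linarith
  have hD : 0 ≤ 2 * (1 - c) / c := div_nonneg (by linarith) hc0.le
  have habs : |u / c| = |u| / c := by rw [abs_div, abs_of_pos hc0]
  have ht0 : 0 ≤ |u| := abs_nonneg u
  have hd0 : 0 ≤ |u / c| := abs_nonneg _
  have htd : |u| ≤ |u / c| := by
    rw [habs, le_div_iff₀ hc0]; nlinarith
  have hcd : c * |u / c| = |u| := by rw [habs]; field_simp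
  have hu2 : u ^ 2 = |u| ^ 2 := (sq_abs u).symm
  have hd2 : (u / c) ^ 2 = |u / c| ^ 2 := (sq_abs _).symm
  by_cases h1 : |u| ≤ 1
  · have hfu : fsp γ u = 1 - u ^ 2 / (1 + γ) := by unfold fsp; rw [if_pos h1]
    by_cases h3 : |u / c| ≤ 1 + γ
    · have hq := fsp_ge_quad γ hγ (u / c)
      have e1 : ((u / c) ^ 2 - u ^ 2) * c = |u| * |u / c| * (1 + c) * (1 - c) := by
        rw [hu2, hd2]; linear_combination (c * |u| + |u / c|) * hcd
      have e2 : |u| * |u / c| * (1 + c) * (1 - c) ≤ 1 * (1 + γ) * 2 * (1 - c) := by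
        apply mul_le_mul_of_nonneg_right _ h1c
        nlinarith [mul_le_mul h1 h3 hd0 (by norm_num : (0:ℝ) ≤ 1), mul_nonneg ht0 hd0]
      have key : ((u / c) ^ 2 - u ^ 2) / (1 + γ) ≤ 2 * (1 - c) / c := by
        rw [div_le_div_iff₀ hβ hc0]; nlinarith [e1, e2]
      have hsub : (u / c) ^ 2 / (1 + γ) - u ^ 2 / (1 + γ) = ((u / c) ^ 2 - u ^ 2) / (1 + γ) :=
        (sub_div _ _ _).symm
      rw [hfu]; linarith
    · push_neg at h3
      have hfd : fsp γ (u / c) = 0 := by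
        unfold fsp; rw [if_neg (by push_neg; linarith), if_neg (by push_neg; linarith)]
      have hcb : c * (1 + γ) ≤ |u| := by
        rw [← hcd]; exact mul_le_mul_of_nonneg_left h3.le hc0.le
      have e : 2 * (1 - c) / c - (1 - u ^ 2 / (1 + γ)) =
          (2 * (1 - c) * (1 + γ) + c * u ^ 2 - c * (1 + γ)) / (c * (1 + γ)) := by
        field_simp; ring
      have h2 : (c * (1 + γ)) ^ 2 ≤ u ^ 2 := by
        rw [hu2]; exact pow_le_pow_left₀ (mul_nonneg hc0.le hβ.le) hcb 2
      have hnum : 0 ≤ 2 * (1 - c) * (1 + γ) + c * u ^ 2 - c * (1 + γ) := by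
        nlinarith [mul_le_mul_of_nonneg_left h2 hc0.le,
          mul_nonneg (sq_nonneg (1 - c)) (show (0:ℝ) ≤ c + 2 by linarith),
          mul_nonneg hγ.le (mul_nonneg (sq_nonneg (1 - c)) (show (0:ℝ) ≤ c + 2 by linarith)),
          mul_nonneg hγ.le (mul_nonneg (mul_nonneg hc0.le hc0.le) hc0.le),
          mul_nonneg (mul_nonneg hγ.le hγ.le) (mul_nonneg (mul_nonneg hc0.le hc0.le) hc0.le)]
      have hfrac := div_nonneg hnum (mul_pos hc0 hβ).le
      rw [← e] at hfrac
      rw [hfu, hfd]; linarith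
  · push_neg at h1
    by_cases h2 : |u| ≤ 1 + γ
    · have hfu : fsp γ u = (|u| - γ - 1) ^ 2 / (γ ^ 2 + γ) := by
        unfold fsp; rw [if_neg (not_le.mpr h1), if_pos h2]
      have hd1 : 1 < |u / c| := lt_of_lt_of_le h1 htd
      by_cases h3 : |u / c| ≤ 1 + γ
      · have hfd : fsp γ (u / c) = (|u / c| - γ - 1) ^ 2 / (γ ^ 2 + γ) := by
          unfold fsp; rw [if_neg (not_le.mpr hd1), if_pos h3]
        rw [hfu, hfd, div_sub_div_same, div_le_div_iff₀ hγβ hc0]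
        have e1 : ((|u| - γ - 1) ^ 2 - (|u / c| - γ - 1) ^ 2) * c =
            |u| * (1 - c) * (2 * (1 + γ) - |u| - |u / c|) := by
          linear_combination (2 * (1 + γ) - |u| - |u / c|) * hcd
        by_cases hS : 0 ≤ 2 * (1 + γ) - |u| - |u / c|
        · linarith [e1,
            mul_nonneg (mul_nonneg ht0 h1c)
              (show (0:ℝ) ≤ 2 * γ - (2 * (1 + γ) - |u| - |u / c|) by linarith),
            mul_nonneg h1c (mul_nonneg hγ.le (show (0:ℝ) ≤ 1 + γ - |u| by linarith))]
        · push_neg at hS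
          linarith [e1, mul_nonneg (mul_nonneg ht0 h1c)
              (show (0:ℝ) ≤ -(2 * (1 + γ) - |u| - |u / c|) by linarith),
            mul_nonneg h1c hγβ.le]
      · push_neg at h3
        have hfd : fsp γ (u / c) = 0 := by
          unfold fsp; rw [if_neg (by push_neg; linarith), if_neg (by push_neg; linarith)]
        have hcb : c * (1 + γ) ≤ |u| := by
          rw [← hcd]; exact mul_le_mul_of_nonneg_left h3.le hc0.le
        rw [hfu, hfd, sub_zero, div_le_div_iff₀ hγβ hc0]
        linarith [mul_nonneg (mul_nonneg hc0.le (show (0:ℝ) ≤ 1 + γ - |u| by linarith))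
            (show (0:ℝ) ≤ |u| - 1 by linarith),
          mul_nonneg (mul_nonneg hc0.le hγ.le)
            (show (0:ℝ) ≤ (1 + γ) * (1 - c) - (1 + γ - |u|) by linarith),
          mul_nonneg (mul_nonneg (show (0:ℝ) ≤ 2 - c by linarith) hγ.le)
            (mul_nonneg hβ.le h1c)]
    · push_neg at h2
      have hfu : fsp γ u = 0 := by
        unfold fsp; rw [if_neg (not_le.mpr h1), if_neg (not_le.mpr h2)]
      rw [hfu]
      linarith [fsp_nonneg γ hγ (u / c)]

/-- with c = 2m/(2m + B₀ − A₀), if F_{γ,σ}(s) ≥ m − A₀ then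
F_{γ,cσ}(s) ≥ m − B₀; and F_{γ,σ}(s) ≥ m − ‖s‖²/((1+γ)σ²) always. -/
theorem stmt_12 {m : ℕ} (hm : 0 < m) (γ σ : ℝ) (hγ : 0 < γ) (hσ : 0 < σ)
    (A0 B0 : ℝ) (hA0 : 0 ≤ A0) (hAB : A0 ≤ B0) :
    (∀ s : Fin m → ℝ, (m : ℝ) - A0 ≤ Fsp γ σ s →
      (m : ℝ) - B0 ≤ Fsp γ (2 * m / (2 * m + B0 - A0) * σ) s) ∧
    ∀ s : Fin m → ℝ, (m : ℝ) - nsq s / ((1 + γ) * σ ^ 2) ≤ Fsp γ σ s := by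
  have hm0 : (0:ℝ) < (m:ℝ) := Nat.cast_pos.mpr hm
  have hβ : (0:ℝ) < 1 + γ := by linarith
  constructor
  · intro s hs
    set c : ℝ := 2 * m / (2 * m + B0 - A0) with hc
    have hden : (0:ℝ) < 2 * m + B0 - A0 := by linarith
    have hc0 : 0 < c := by rw [hc]; positivity
    have hc1 : c ≤ 1 := by rw [hc, div_le_one hden]; linarith
    have key : ∀ i, fsp γ (s i / σ) - fsp γ (s i / (c * σ)) ≤ 2 * (1 - c) / c := by
      intro i
      have h := fsp_key γ hγ c hc0 hc1 (s i / σ)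
      rwa [div_div, mul_comm σ c] at h
    have hsum : Fsp γ σ s - Fsp γ (c * σ) s ≤ (m : ℝ) * (2 * (1 - c) / c) := by
      unfold Fsp
      rw [← Finset.sum_sub_distrib]
      calc ∑ i, (fsp γ (s i / σ) - fsp γ (s i / (c * σ)))
          ≤ ∑ _i : Fin m, 2 * (1 - c) / c := Finset.sum_le_sum fun i _ => key i
        _ = (m : ℝ) * (2 * (1 - c) / c) := by
            rw [Finset.sum_const, Finset.card_univ, Fintype.card_fin, nsmul_eq_mul]
    have hMB : (m : ℝ) * (2 * (1 - c) / c) = B0 - A0 := by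
      rw [hc]
      field_simp
      have h2 : (m : ℝ) * 2 + B0 - A0 ≠ 0 := by linarith
      field_simp
      ring
    linarith
  · intro s
    have hterm : ∀ i, (1 : ℝ) - (s i) ^ 2 / ((1 + γ) * σ ^ 2) ≤ fsp γ (s i / σ) := by
      intro i
      have h := fsp_ge_quad γ hγ (s i / σ)
      have e : (s i / σ) ^ 2 / (1 + γ) = (s i) ^ 2 / ((1 + γ) * σ ^ 2) := by
        rw [div_pow, div_div, mul_comm (σ ^ 2)]
      rwa [e] at h
    have hsum : ∑ i, ((1 : ℝ) - (s i) ^ 2 / ((1 + γ) * σ ^ 2)) ≤ Fsp γ σ s :=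
      Finset.sum_le_sum fun i _ => hterm i
    have e2 : ∑ i, ((1 : ℝ) - (s i) ^ 2 / ((1 + γ) * σ ^ 2)) =
        (m : ℝ) - nsq s / ((1 + γ) * σ ^ 2) := by
      rw [Finset.sum_sub_distrib, Finset.sum_const, Finset.card_univ, Fintype.card_fin,
        nsmul_eq_mul, mul_one, nsq, Finset.sum_div]
    linarith
end

section
/- Let A be a real n×m matrix with n < m having orthonormal rows (A Aᵀ = I_n). Let k ≥ 1 be an integer, let α > 1 be a real constant, set n0 = ⌈2kα⌉, and assume n0 ≤ n. If α·δ_{n0}^{min} + ‖A‖₂ ≤ α, where δ_{n0}^{min} is the lower asymmetric restricted isometry constant of A and ‖A‖₂ is the spectral norm of A, then γ_A(n0) + 1 ≤ α and consequently 2k·(1 + γ_A(n0)) ≤ n0 (the sparsity condition under which SL0 convergence to the sparsest solution is guaranteed). -/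
open Finset
open scoped BigOperators

open Matrix in
theorem key_ineq {n m : ℕ} (A : Matrix (Fin n) (Fin m) ℝ) (horth : A * A.transpose = 1)
    (s : Fin m → ℝ) (hAs : A.mulVec s = 0) (I : Finset (Fin m)) (n0 : ℕ) (hI : I.card ≤ n0)
    (δ : ℝ) (hδ0 : 0 ≤ δ)
    (hrip : ∀ v : Fin m → ℝ, l0 v ≤ n0 → (1 - δ) * nsq v ≤ nsq (A.mulVec v)) :
    (1 - δ) * (∑ i ∈ I, s i ^ 2) ≤ δ * (∑ i ∈ Iᶜ, s i ^ 2) := by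
  classical
  set x : Fin m → ℝ := fun i => if i ∈ I then s i else 0 with hx
  set a : ℝ := ∑ i ∈ I, s i ^ 2 with hadef
  set b : ℝ := ∑ i ∈ Iᶜ, s i ^ 2 with hbdef
  have ha0 : 0 ≤ a := Finset.sum_nonneg fun i _ => sq_nonneg _
  have hb0 : 0 ≤ b := Finset.sum_nonneg fun i _ => sq_nonneg _
  -- nsq x = a
  have hxnsq : nsq x = a := by
    rw [nsq, hadef]
    rw [← Finset.sum_filter_add_sum_filter_not Finset.univ (· ∈ I)]
    have h1 : ∀ i ∈ Finset.univ.filter (· ∈ I), x i ^ 2 = s i ^ 2 := by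
      intro i hi; simp only [Finset.mem_filter] at hi; simp [hx, hi.2]
    have h2 : ∀ i ∈ Finset.univ.filter (¬ · ∈ I), x i ^ 2 = 0 := by
      intro i hi; simp only [Finset.mem_filter] at hi; simp [hx, hi.2]
    rw [Finset.sum_congr rfl h1, Finset.sum_eq_zero h2, add_zero,
      Finset.filter_mem_eq_inter, Finset.univ_inter]
  have hl0x : l0 x ≤ n0 := by
    refine le_trans ?_ hI
    apply Finset.card_le_card
    intro i hi
    simp only [l0, Finset.mem_filter] at hi
    by_contra h
    exact hi.2 (by simp [hx, h])
  -- adjoint identity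
  have hadj : ∀ (y : Fin n → ℝ) (w : Fin m → ℝ),
      (A.transpose.mulVec y) ⬝ᵥ w = y ⬝ᵥ (A.mulVec w) := by
    intro y w
    rw [Matrix.mulVec_transpose, ← Matrix.dotProduct_mulVec]
  set P : Matrix (Fin m) (Fin m) ℝ := A.transpose * A with hP
  have hPv : ∀ v : Fin m → ℝ, P.mulVec v = A.transpose.mulVec (A.mulVec v) := by
    intro v; rw [hP, ← Matrix.mulVec_mulVec]
  have hPdot : ∀ (u w : Fin m → ℝ), (P.mulVec u) ⬝ᵥ w = (A.mulVec u) ⬝ᵥ (A.mulVec w) := by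
    intro u w; rw [hPv, hadj]
  have hAPx : A.mulVec (P.mulVec x) = A.mulVec x := by
    rw [hPv x, Matrix.mulVec_mulVec, horth, Matrix.one_mulVec]
  set t : Fin m → ℝ := x - P.mulVec x with ht
  -- t ⬝ s = a
  have hxs : x ⬝ᵥ s = a := by
    rw [dotProduct, hadef]
    rw [← Finset.sum_filter_add_sum_filter_not Finset.univ (· ∈ I)]
    have h1 : ∀ i ∈ Finset.univ.filter (· ∈ I), x i * s i = s i ^ 2 := by
      intro i hi; simp only [Finset.mem_filter] at hi; simp [hx, hi.2, sq]
    have h2 : ∀ i ∈ Finset.univ.filter (¬ · ∈ I), x i * s i = 0 := by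
      intro i hi; simp only [Finset.mem_filter] at hi; simp [hx, hi.2]
    rw [Finset.sum_congr rfl h1, Finset.sum_eq_zero h2, add_zero,
      Finset.filter_mem_eq_inter, Finset.univ_inter]
  have hts : t ⬝ᵥ s = a := by
    rw [ht, sub_dotProduct, hxs, hPdot, hAs, dotProduct_zero, sub_zero]
  -- t ⬝ t = nsq x - nsq (A x)
  have hnsqdot : ∀ {ι : Type} [Fintype ι] (v : ι → ℝ), v ⬝ᵥ v = nsq v := by
    intro ι _ v; simp [dotProduct, nsq, sq]
  have hPxx : (P.mulVec x) ⬝ᵥ x = nsq (A.mulVec x) := by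
    rw [hPdot, hnsqdot]
  have hxPx : x ⬝ᵥ (P.mulVec x) = nsq (A.mulVec x) := by
    rw [dotProduct_comm, hPxx]
  have hPxPx : (P.mulVec x) ⬝ᵥ (P.mulVec x) = nsq (A.mulVec x) := by
    rw [hPdot, hAPx, hnsqdot]
  have htt : t ⬝ᵥ t = nsq x - nsq (A.mulVec x) := by
    rw [ht, sub_dotProduct, dotProduct_sub, dotProduct_sub,
      hnsqdot, hxPx, hPxx, hPxPx]
    ring
  have httle : t ⬝ᵥ t ≤ δ * a := by
    have h1 := hrip x hl0x
    rw [hxnsq] at h1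
    rw [htt, hxnsq]
    linarith
  have htt0 : 0 ≤ t ⬝ᵥ t := by rw [hnsqdot]; exact Finset.sum_nonneg fun i _ => sq_nonneg _
  have hss : s ⬝ᵥ s = a + b := by
    rw [hnsqdot, nsq, hadef, hbdef, Finset.sum_add_sum_compl]
  -- Cauchy-Schwarz
  have hcs : (t ⬝ᵥ s) ^ 2 ≤ (t ⬝ᵥ t) * (s ⬝ᵥ s) := by
    have h := Finset.sum_mul_sq_le_sq_mul_sq Finset.univ t s
    simpa [dotProduct, sq] using h
  rw [hts, hss] at hcs
  -- a^2 ≤ δ a (a + b)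
  have hfin : a ^ 2 ≤ δ * a * (a + b) := by
    calc a ^ 2 ≤ (t ⬝ᵥ t) * (a + b) := hcs
    _ ≤ δ * a * (a + b) := by nlinarith
  rcases eq_or_lt_of_le ha0 with h | h
  · rw [← h]; nlinarith
  · nlinarith


open Matrix in
theorem smax_ge_one {n m : ℕ} (hn : 0 < n) (A : Matrix (Fin n) (Fin m) ℝ)
    (horth : A * A.transpose = 1) : 1 ≤ sMaxSq A := by
  classical
  set S := {r | ∃ v : Fin m → ℝ, nsq v = 1 ∧ r = nsq (A.mulVec v)} with hS
  have hbdd : BddAbove S := by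
    refine ⟨∑ i, ∑ j, (A i j) ^ 2, ?_⟩
    rintro r ⟨v, hv1, rfl⟩
    rw [nsq]
    calc ∑ i, (A.mulVec v i) ^ 2
        ≤ ∑ i, (∑ j, (A i j) ^ 2) * (∑ j, v j ^ 2) := by
          apply Finset.sum_le_sum
          intro i _
          have h := Finset.sum_mul_sq_le_sq_mul_sq Finset.univ (fun j => A i j) v
          simpa [Matrix.mulVec, dotProduct, sq] using h
      _ = ∑ i, ∑ j, (A i j) ^ 2 := by
          rw [show (∑ j, v j ^ 2) = 1 from hv1]
          simp
  have hmem : (1 : ℝ) ∈ S := by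
    set i0 : Fin n := ⟨0, hn⟩
    have hAv : ∀ i, A.mulVec (fun j => A i0 j) i = if i = i0 then 1 else 0 := by
      intro i
      have h := congrFun (congrFun horth i) i0
      simpa [Matrix.mul_apply, Matrix.transpose_apply, Matrix.mulVec,
        dotProduct, Matrix.one_apply] using h
    refine ⟨fun j => A i0 j, ?_, ?_⟩
    · have h := hAv i0
      simp only [if_true, eq_self_iff_true] at h
      have h2 : (A.mulVec fun j => A i0 j) i0 = ∑ j, A i0 j ^ 2 := by
        simp [Matrix.mulVec, dotProduct, sq]
      rw [nsq, ← h2, h]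
    · rw [nsq]
      have hsq : ∀ i, (A.mulVec (fun j => A i0 j) i) ^ 2 = if i = i0 then (1:ℝ) else 0 := by
        intro i; rw [hAv i]; split <;> norm_num
      rw [Finset.sum_congr rfl (fun i _ => hsq i)]
      simp
  have : sMaxSq A = sSup S := rfl
  rw [this]
  exact le_csSup hbdd hmem

lemma nsq_nonneg {ι : Type*} [Fintype ι] (v : ι → ℝ) : 0 ≤ nsq v :=
  Finset.sum_nonneg fun i _ => sq_nonneg _

lemma aricMin_nonneg {n m : ℕ} (A : Matrix (Fin n) (Fin m) ℝ) (k : ℕ) :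
    0 ≤ aricMin A k :=
  Real.sInf_nonneg fun _ hx => hx.1

lemma aricMin_mem_ne : ∀ {n m : ℕ} (A : Matrix (Fin n) (Fin m) ℝ) (k : ℕ),
    (1 : ℝ) ∈ {δ : ℝ | 0 ≤ δ ∧ ∀ s : Fin m → ℝ, l0 s ≤ k → (1 - δ) * nsq s ≤ nsq (A.mulVec s)} := by
  intro n m A k
  refine ⟨zero_le_one, fun s _ => ?_⟩
  rw [sub_self, zero_mul]
  exact nsq_nonneg _

lemma aricMin_rip {n m : ℕ} (A : Matrix (Fin n) (Fin m) ℝ) (k : ℕ) :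
    ∀ v : Fin m → ℝ, l0 v ≤ k → (1 - aricMin A k) * nsq v ≤ nsq (A.mulVec v) := by
  intro v hv
  by_cases h : nsq v = 0
  · rw [h, mul_zero]; exact nsq_nonneg _
  · have hv0 : 0 < nsq v := lt_of_le_of_ne (nsq_nonneg v) (Ne.symm h)
    have hlb : 1 - nsq (A.mulVec v) / nsq v ≤ aricMin A k := by
      apply le_csInf ⟨1, aricMin_mem_ne A k⟩
      intro δ hδ
      have h2 := hδ.2 v hv
      rw [sub_le_iff_le_add]
      have : 1 - δ ≤ nsq (A.mulVec v) / nsq v := (le_div_iff₀ hv0).mpr h2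
      linarith
    have : 1 - aricMin A k ≤ nsq (A.mulVec v) / nsq v := by linarith
    calc (1 - aricMin A k) * nsq v ≤ (nsq (A.mulVec v) / nsq v) * nsq v := by
          exact mul_le_mul_of_nonneg_right this (le_of_lt hv0)
      _ = nsq (A.mulVec v) := by field_simp


/-- if α·δ_{⌈2kα⌉}^{min} + ‖A‖₂ ≤ α for some α > 1, then
γ_A(n0) + 1 ≤ α for n0 = ⌈2kα⌉, and consequently 2k(1 + γ_A(n0)) ≤ n0. -/
theorem stmt_14 {n m : ℕ} (hnm : n < m) (A : Matrix (Fin n) (Fin m) ℝ)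
    (horth : A * A.transpose = 1)
    (k : ℕ) (hk : 1 ≤ k) (α : ℝ) (hα : 1 < α)
    (n0 : ℕ) (hn0def : n0 = ⌈2 * (k : ℝ) * α⌉₊) (hn0 : n0 ≤ n)
    (hcond : α * aricMin A n0 + Real.sqrt (sMaxSq A) ≤ α) :
    gammaA A n0 + 1 ≤ α ∧ 2 * (k : ℝ) * (1 + gammaA A n0) ≤ (n0 : ℝ) := by
  have hk' : (0:ℝ) < (k:ℝ) := by exact_mod_cast hk
  have hkα : (0:ℝ) < 2 * (k:ℝ) * α := by nlinarith
  have hn0pos : 0 < n0 := hn0def ▸ Nat.ceil_pos.mpr hkα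
  have hn : 0 < n := lt_of_lt_of_le hn0pos hn0
  set δ := aricMin A n0 with hδdef
  have hδ0 : 0 ≤ δ := aricMin_nonneg A n0
  have hrip := aricMin_rip A n0
  have hsm : (1:ℝ) ≤ Real.sqrt (sMaxSq A) := by
    rw [show (1:ℝ) = Real.sqrt 1 by rw [Real.sqrt_one]]
    exact Real.sqrt_le_sqrt (smax_ge_one hn A horth)
  have hαδ : α * δ ≤ α - 1 := by linarith
  have hδ1 : δ < 1 := by nlinarith
  have hbound : ∀ r ∈ gammaSet A n0, r ≤ α - 1 := by
    rintro r ⟨I, s, hcard, hAs, hs0, rfl⟩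
    set a : ℝ := ∑ i ∈ I, s i ^ 2 with hadef
    set b : ℝ := ∑ i ∈ Iᶜ, s i ^ 2 with hbdef
    have ha0 : 0 ≤ a := Finset.sum_nonneg fun i _ => sq_nonneg _
    have hb0 : 0 ≤ b := Finset.sum_nonneg fun i _ => sq_nonneg _
    have hkey := key_ineq A horth s hAs I n0 hcard δ hδ0 hrip
    rw [← hadef, ← hbdef] at hkey
    have hbpos : 0 < b := by
      rcases lt_or_eq_of_le hb0 with h | h
      · exact h
      · exfalso
        have haz : a = 0 := by nlinarith
        have hall : ∑ i, s i ^ 2 = 0 := by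
          rw [← Finset.sum_add_sum_compl I]
          rw [← hadef, ← hbdef, haz, ← h]
          ring
        apply hs0
        funext i
        have := (Finset.sum_eq_zero_iff_of_nonneg
          (fun i (_ : i ∈ Finset.univ) => sq_nonneg (s i))).mp hall i (Finset.mem_univ i)
        exact (pow_eq_zero_iff two_ne_zero).mp this
    rw [div_le_iff₀ hbpos]
    have hfac : 0 ≤ (α - 1 - α * δ) * b := by
      apply mul_nonneg (by linarith) hb0
    nlinarith
  have hga : gammaA A n0 ≤ α - 1 := Real.sSup_le hbound (by linarith)
  constructor
  · linarith
  · have hc := Nat.le_ceil (2 * (k:ℝ) * α)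
    conv_rhs => rw [hn0def]
    calc 2 * (k:ℝ) * (1 + gammaA A n0) ≤ 2 * (k:ℝ) * α := by nlinarith
      _ ≤ (⌈2 * (k:ℝ) * α⌉₊ : ℝ) := hc
end

section
/- For real numbers 0 < β ≤ α, define d(α,β) = 1 − √(β/α) − √((2β/α)·log(e/β)), and define γ(α,β) = (1+√(1/α))²/d(α,β)² if d(α,β) > 0, and γ(α,β) = +∞ otherwise (with the convention β/(2+2γ(α,β)) = 0 when γ(α,β) = +∞). Define ρ(α) = sup over 0 < β ≤ α of β/(2+2γ(α,β)). Then ρ(α) > 0 for every α > 0; in particular, for every α > 0 there exists β ∈ (0, α] with d(α,β) > 0 and β/(2+2γ(α,β)) > 0. -/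
open Finset
open scoped BigOperators

/-- d(α,β) = 1 − √(β/α) − √((2β/α)·log(e/β)). -/
noncomputable def dAB (a b : ℝ) : ℝ :=
  1 - Real.sqrt (b / a) - Real.sqrt ((2 * b / a) * Real.log (Real.exp 1 / b))

/-- γ(α,β) = (1+√(1/α))²/d(α,β)² (meaningful when d(α,β) > 0). -/
noncomputable def gAB (a b : ℝ) : ℝ := (1 + Real.sqrt (1 / a)) ^ 2 / (dAB a b) ^ 2

/-- β/(2+2γ(α,β)), with the convention that it is 0 when γ(α,β) = +∞
(i.e. when d(α,β) ≤ 0). -/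
noncomputable def qAB (a b : ℝ) : ℝ := if 0 < dAB a b then b / (2 + 2 * gAB a b) else 0

/-- ρ(α) = sup over 0 < β ≤ α of β/(2+2γ(α,β)). -/
noncomputable def rhoA (a : ℝ) : ℝ := sSup {r : ℝ | ∃ b : ℝ, 0 < b ∧ b ≤ a ∧ r = qAB a b}

/-- ρ(α) > 0 for every α > 0; in particular some β ∈ (0,α] has
d(α,β) > 0 and β/(2+2γ(α,β)) > 0. -/
theorem stmt_16 (a : ℝ) (ha : 0 < a) :
    0 < rhoA a ∧ ∃ b : ℝ, 0 < b ∧ b ≤ a ∧ 0 < dAB a b ∧ 0 < qAB a b := by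
  have hepos : (0:ℝ) < Real.exp 1 := Real.exp_pos 1
  set b : ℝ := min (a / 16) (a ^ 2 / (4096 * Real.exp 1)) with hb_def
  have hb0 : 0 < b := lt_min (by positivity) (by positivity)
  have hba : b ≤ a := (min_le_left _ _).trans (by linarith)
  have hb2 : b ≤ a ^ 2 / (4096 * Real.exp 1) := min_le_right _ _
  -- first term bound
  have hsqrt16 : Real.sqrt (1 / 16 : ℝ) = 1 / 4 := by
    rw [show (1/16:ℝ) = (1/4)^2 by norm_num, Real.sqrt_sq (by norm_num)]
  have h1 : Real.sqrt (b / a) ≤ 1 / 4 := by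
    rw [← hsqrt16]
    apply Real.sqrt_le_sqrt
    rw [div_le_div_iff₀ ha (by norm_num)]
    have : b ≤ a / 16 := min_le_left _ _
    nlinarith
  -- log bound: log x ≤ 2 √x for x > 0
  have hlog : Real.log (Real.exp 1 / b) ≤ 2 * Real.sqrt (Real.exp 1 / b) := by
    have hx : (0:ℝ) < Real.exp 1 / b := by positivity
    have h2 : Real.log (Real.sqrt (Real.exp 1 / b)) ≤ Real.sqrt (Real.exp 1 / b) - 1 :=
      Real.log_le_sub_one_of_pos (Real.sqrt_pos.2 hx)
    have h3 : Real.log (Real.sqrt (Real.exp 1 / b)) = Real.log (Real.exp 1 / b) / 2 :=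
      Real.log_sqrt hx.le
    nlinarith [Real.sqrt_nonneg (Real.exp 1 / b)]
  -- b * sqrt(e/b) = sqrt(e*b)
  have hmul : b * Real.sqrt (Real.exp 1 / b) = Real.sqrt (Real.exp 1 * b) := by
    rw [← Real.sqrt_sq hb0.le, ← Real.sqrt_mul (by positivity)]
    congr 1
    field_simp
    ring
    rw [Real.sq_sqrt (by positivity)]
  have hsq : Real.sqrt (Real.exp 1 * b) ≤ a / 64 := by
    have : Real.exp 1 * b ≤ (a / 64) ^ 2 := by
      have := mul_le_mul_of_nonneg_left hb2 hepos.le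
      calc Real.exp 1 * b ≤ Real.exp 1 * (a ^ 2 / (4096 * Real.exp 1)) := this
        _ = (a / 64) ^ 2 := by field_simp; ring
    calc Real.sqrt (Real.exp 1 * b) ≤ Real.sqrt ((a / 64) ^ 2) := Real.sqrt_le_sqrt this
      _ = a / 64 := Real.sqrt_sq (by positivity)
  have h2 : Real.sqrt ((2 * b / a) * Real.log (Real.exp 1 / b)) ≤ 1 / 4 := by
    rw [← hsqrt16]
    apply Real.sqrt_le_sqrt
    have hc : (0:ℝ) ≤ 2 * b / a := by positivity
    calc (2 * b / a) * Real.log (Real.exp 1 / b)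
        ≤ (2 * b / a) * (2 * Real.sqrt (Real.exp 1 / b)) :=
          mul_le_mul_of_nonneg_left hlog hc
      _ = (4 / a) * (b * Real.sqrt (Real.exp 1 / b)) := by ring
      _ = (4 / a) * Real.sqrt (Real.exp 1 * b) := by rw [hmul]
      _ ≤ (4 / a) * (a / 64) := by
          apply mul_le_mul_of_nonneg_left hsq (by positivity)
      _ = 1 / 16 := by field_simp; norm_num
  have hd : 0 < dAB a b := by
    unfold dAB
    linarith
  have hg : 0 ≤ gAB a b := by unfold gAB; positivity
  have hq : 0 < qAB a b := by
    unfold qAB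
    rw [if_pos hd]
    apply div_pos hb0
    linarith
  have hbdd : BddAbove {r : ℝ | ∃ b' : ℝ, 0 < b' ∧ b' ≤ a ∧ r = qAB a b'} := by
    refine ⟨a / 2, ?_⟩
    rintro r ⟨b', hb'0, hb'a, rfl⟩
    unfold qAB
    split
    · have hg' : 0 ≤ gAB a b' := by unfold gAB; positivity
      calc b' / (2 + 2 * gAB a b') ≤ b' / 2 := by
            apply div_le_div_of_nonneg_left hb'0.le (by norm_num) (by linarith)
        _ ≤ a / 2 := by linarith
    · positivity
  have hmem : qAB a b ∈ {r : ℝ | ∃ b' : ℝ, 0 < b' ∧ b' ≤ a ∧ r = qAB a b'} :=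
    ⟨b, hb0, hba, rfl⟩
  have hrho : qAB a b ≤ rhoA a := le_csSup hbdd hmem
  exact ⟨lt_of_lt_of_le hq hrho, b, hb0, hba, hd, hq⟩
end
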